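/- For a positive integer n, 2^n - 1 equals the product over all odd primes p with v(p) ∣ n of p^{ε(p) + ord_p(n)}. -/

import Mathlib

noncomputable def wieferichExp (p : ℕ) : ℕ := (2 ^ orderOf (2 : ZMod p) - 1).factorization p

lemma dvd_mersenne_iff (p n : ℕ) (hp : p.Prime) :
    p ∣ 2 ^ n - 1 ↔ (2 : ZMod p) ^ n = 1 := by
  haveI : Fact p.Prime := ⟨hp⟩
  have h1 : (1 : ℕ) ≤ 2 ^ n := Nat.one_le_two_pow
  rw [← ZMod.natCast_eq_zero_iff, Nat.cast_sub h1]
  push_cast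
  rw [sub_eq_zero]

lemma mersenne_val (p n : ℕ) (hp : p.Prime) (hodd : Odd p)
    (hdvd : orderOf (2 : ZMod p) ∣ n) (hn : n ≠ 0) :
    (2 ^ n - 1).factorization p = wieferichExp p + n.factorization p := by
  haveI : Fact p.Prime := ⟨hp⟩
  have hp2 : p ≠ 2 := by rintro rfl; exact (Nat.not_odd_iff_even.mpr even_two) hodd
  have hp3 : 3 ≤ p := by
    have := hp.two_le; omega
  have h2 : (2 : ZMod p) ≠ 0 := by
    have : ((2 : ℕ) : ZMod p) ≠ 0 := by
      rw [Ne, ZMod.natCast_eq_zero_iff]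
      intro h
      exact hp2 ((Nat.prime_dvd_prime_iff_eq hp Nat.prime_two).mp h)
    simpa using this
  set v := orderOf (2 : ZMod p) with hv
  have hferm : (2 : ZMod p) ^ (p - 1) = 1 := ZMod.pow_card_sub_one_eq_one h2
  have hvdvd : v ∣ p - 1 := orderOf_dvd_of_pow_eq_one hferm
  have hvpos : 0 < v := by
    have hfin : IsOfFinOrder (2 : ZMod p) :=
      isOfFinOrder_iff_pow_eq_one.mpr ⟨p - 1, by omega, hferm⟩
    exact hfin.orderOf_pos
  have hpv : ¬ p ∣ v := by
    intro h
    have hle : v ≤ p - 1 := Nat.le_of_dvd (by omega) hvdvd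
    have := Nat.le_of_dvd hvpos h
    omega
  obtain ⟨m, rfl⟩ := hdvd
  have hm : m ≠ 0 := by rintro rfl; simp at hn
  have hpdvd : p ∣ 2 ^ v - 1 := (dvd_mersenne_iff p v hp).mpr (pow_orderOf_eq_one _)
  have hpx : ¬ p ∣ 2 ^ v := by
    intro h
    have := hp.dvd_of_dvd_pow h
    exact hp2 ((Nat.prime_dvd_prime_iff_eq hp Nat.prime_two).mp this)
  have h1v : (1 : ℕ) < 2 ^ v := Nat.one_lt_two_pow_iff.mpr (by omega)
  have hlte : padicValNat p ((2 ^ v) ^ m - 1 ^ m) =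
      padicValNat p (2 ^ v - 1) + padicValNat p m :=
    padicValNat.pow_sub_pow hodd h1v hpdvd hpx hm
  rw [one_pow, ← pow_mul] at hlte
  have hfac : (2 ^ (v * m) - 1).factorization p = padicValNat p (2 ^ (v * m) - 1) :=
    Nat.factorization_def _ hp
  have hfacn : (v * m).factorization p = padicValNat p (v * m) :=
    Nat.factorization_def _ hp
  have hfacv : wieferichExp p = padicValNat p (2 ^ v - 1) := Nat.factorization_def _ hp
  have hmul : padicValNat p (v * m) = padicValNat p v + padicValNat p m :=
    padicValNat.mul (by omega) hm
  have hzero : padicValNat p v = 0 := padicValNat.eq_zero_of_not_dvd hpv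
  rw [hfac, hfacn, hfacv, hlte, hmul, hzero]
  omega

open scoped Classical in
theorem mersenne_factorization (n : ℕ) (hn : 1 ≤ n) :
    2 ^ n - 1 =
      ∏ p ∈ (Finset.range (2 ^ n)).filter
        (fun p => p.Prime ∧ Odd p ∧ orderOf (2 : ZMod p) ∣ n),
        p ^ (wieferichExp p + n.factorization p) := by
  set M := 2 ^ n - 1 with hM
  have h2n : 2 ≤ 2 ^ n := by
    calc 2 = 2 ^ 1 := (pow_one 2).symm
    _ ≤ 2 ^ n := Nat.pow_le_pow_right (by norm_num) hn
  have hM0 : M ≠ 0 := by omega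
  have hModd : Odd M := by
    have : Even (2 ^ n) := (Nat.even_pow).mpr ⟨even_two, by omega⟩
    rcases this with ⟨k, hk⟩
    exact ⟨k - 1, by omega⟩
  have hset : (Finset.range (2 ^ n)).filter
      (fun p => p.Prime ∧ Odd p ∧ orderOf (2 : ZMod p) ∣ n) = M.primeFactors := by
    ext p
    simp only [Finset.mem_filter, Finset.mem_range, Nat.mem_primeFactors]
    constructor
    · rintro ⟨hlt, hp, hodd, hdvd⟩
      refine ⟨hp, ?_, hM0⟩
      rw [hM]
      exact (dvd_mersenne_iff p n hp).mpr
        (by obtain ⟨c, rfl⟩ := hdvd; rw [pow_mul, pow_orderOf_eq_one, one_pow])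
    · rintro ⟨hp, hdvd, -⟩
      have hord : (2 : ZMod p) ^ n = 1 := (dvd_mersenne_iff p n hp).mp hdvd
      have hodd : Odd p := by
        rw [← Nat.not_even_iff_odd] at hModd ⊢
        intro hpe
        exact hModd (hpe.two_dvd.trans hdvd |> (even_iff_two_dvd).mpr)
      refine ⟨?_, hp, hodd, orderOf_dvd_of_pow_eq_one hord⟩
      have : p ≤ M := Nat.le_of_dvd (by omega) hdvd
      omega
  rw [hset]
  have hself := Nat.factorization_prod_pow_eq_self hM0
  rw [Finsupp.prod, Nat.support_factorization] at hself
  conv_lhs => rw [← hself]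
  refine Finset.prod_congr rfl fun p hp => ?_
  rw [Nat.mem_primeFactors] at hp
  obtain ⟨hpp, hpd, -⟩ := hp
  have hord : (2 : ZMod p) ^ n = 1 := (dvd_mersenne_iff p n hpp).mp hpd
  have hodd : Odd p := by
    rw [← Nat.not_even_iff_odd] at hModd ⊢
    intro hpe
    exact hModd (hpe.two_dvd.trans hpd |> (even_iff_two_dvd).mpr)
  rw [mersenne_val p n hpp hodd (orderOf_dvd_of_pow_eq_one hord) (by omega)]
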